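/- Define d : ℕ+ × ℕ+ → ℕ recursively by d(1,1) = 1, and for α, β ≥ 1: if α and β are both odd and α ≡ β (mod 4) then d(α,β) = d((α+1)/2, (β+1)/2); if α and β are both odd and α ≢ β (mod 4) then d(α,β) = d((α-1)/2, (β+1)/2); if α and β are both even and α ≡ β (mod 4) then d(α,β) = d(α/2, β/2); if α and β are both even and α ≢ β (mod 4) then d(α,β) = 0. Then for all positive integers α ≥ β of the same parity, d(α,β) = 1 if and only if (α + β - 2) ⊇_2 (α - β). -/
import Mathlib


/-- `a ⊇_2 b`: every binary digit of `b` is `0` or equals the corresponding digit of `a`. -/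
def Sup2 (a b : ℕ) : Prop :=
  ∀ i, b.testBit i = false ∨ b.testBit i = a.testBit i

lemma testBit_two (n : ℕ) (i : ℕ) : n.testBit (i + 2) = (n / 4).testBit i := by
  rw [show i + 2 = (i+1).succ from rfl, Nat.testBit_succ,
    show i + 1 = Nat.succ i from rfl, Nat.testBit_succ, Nat.div_div_eq_div_mul]

lemma testBit_one_eq (n : ℕ) : n.testBit 1 = decide (n / 2 % 2 = 1) := by
  rw [show (1:ℕ) = Nat.succ 0 from rfl, Nat.testBit_succ, Nat.testBit_zero]

lemma sup2_reduce (s t : ℕ) (hs : s % 2 = 0) (ht : t % 2 = 0)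
    (h : t % 4 = 0 ∨ t % 4 = s % 4) :
    Sup2 s t ↔ Sup2 (2 * (s / 4)) (2 * (t / 4)) := by
  constructor
  · intro H i
    match i with
    | 0 =>
      left
      rw [Nat.testBit_zero]
      simp [Nat.mul_mod_right]
    | (i+1) =>
      have e1 : (2 * (t / 4)).testBit (i+1) = t.testBit (i + 2) := by
        rw [show i + 1 = Nat.succ i from rfl, Nat.testBit_succ,
          Nat.mul_div_cancel_left _ (by norm_num), testBit_two]
      have e2 : (2 * (s / 4)).testBit (i+1) = s.testBit (i + 2) := by
        rw [show i + 1 = Nat.succ i from rfl, Nat.testBit_succ,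
          Nat.mul_div_cancel_left _ (by norm_num), testBit_two]
      rw [e1, e2]
      exact H (i + 2)
  · intro H i
    match i with
    | 0 =>
      left
      rw [Nat.testBit_zero]
      simp [ht]
    | 1 =>
      rcases h with h | h
      · left
        rw [testBit_one_eq]
        simp only [decide_eq_false_iff_not]
        omega
      · right
        rw [testBit_one_eq, testBit_one_eq]
        congr 1
        simp only [eq_iff_iff]
        omega
    | (i+2) =>
      have e1 : (2 * (t / 4)).testBit (i+1) = t.testBit (i + 2) := by
        rw [show i + 1 = Nat.succ i from rfl, Nat.testBit_succ,
          Nat.mul_div_cancel_left _ (by norm_num), testBit_two]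
      have e2 : (2 * (s / 4)).testBit (i+1) = s.testBit (i + 2) := by
        rw [show i + 1 = Nat.succ i from rfl, Nat.testBit_succ,
          Nat.mul_div_cancel_left _ (by norm_num), testBit_two]
      rw [← e1, ← e2]
      exact H (i + 1)

lemma sup2_bad (s t : ℕ) (hs : s % 4 = 0) (ht : t % 4 = 2) : ¬ Sup2 s t := by
  intro H
  rcases H 1 with h | h
  · rw [testBit_one_eq] at h
    simp only [decide_eq_false_iff_not] at h
    omega
  · rw [testBit_one_eq, testBit_one_eq] at h
    have h1 : t / 2 % 2 = 1 := by omega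
    have h2 : ¬ (s / 2 % 2 = 1) := by omega
    simp [h1, h2] at h

lemma aux_main (f : ℕ → ℕ → ℕ)
    (h11 : f 1 1 = 1)
    (hoo : ∀ α β, 1 ≤ α → 1 ≤ β → Odd α → Odd β → α % 4 = β % 4 →
      f α β = f ((α + 1) / 2) ((β + 1) / 2))
    (hoo' : ∀ α β, 1 ≤ α → 1 ≤ β → Odd α → Odd β → α % 4 ≠ β % 4 →
      f α β = f ((α - 1) / 2) ((β + 1) / 2))
    (hee : ∀ α β, 1 ≤ α → 1 ≤ β → Even α → Even β → α % 4 = β % 4 →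
      f α β = f (α / 2) (β / 2))
    (hee' : ∀ α β, 1 ≤ α → 1 ≤ β → Even α → Even β → α % 4 ≠ β % 4 →
      f α β = 0) :
    ∀ n α β, α + β ≤ n → 1 ≤ β → β ≤ α → α % 2 = β % 2 →
      (f α β = 1 ↔ Sup2 (α + β - 2) (α - β)) := by
  intro n
  induction n with
  | zero => intro α β h hβ _ _; omega
  | succ n ih =>
    intro α β hle hβ hβα hpar
    by_cases hsmall : α + β ≤ n
    · exact ih α β hsmall hβ hβα hpar
    by_cases hα1 : α = 1
    · have hβ1 : β = 1 := by omega
      subst hα1; subst hβ1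
      simp only [h11, Nat.add_sub_cancel, Nat.sub_self]
      constructor
      · intro _ i; left; exact Nat.zero_testBit i
      · intro _; trivial
    have hα2 : 2 ≤ α := by omega
    rcases Nat.even_or_odd β with hbe | hbo
    · -- both even
      have hbe' : β % 2 = 0 := Nat.even_iff.mp hbe
      have hae : Even α := Nat.even_iff.mpr (by omega)
      by_cases h4 : α % 4 = β % 4
      · rw [hee α β (by omega) hβ hae hbe h4]
        rw [ih (α / 2) (β / 2) (by omega) (by omega) (by omega) (by omega)]
        have e1 : α / 2 + β / 2 - 2 = 2 * ((α + β - 2) / 4) := by omega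
        have e2 : α / 2 - β / 2 = 2 * ((α - β) / 4) := by omega
        rw [e1, e2]
        exact (sup2_reduce (α + β - 2) (α - β) (by omega) (by omega) (by omega)).symm
      · rw [hee' α β (by omega) hβ hae hbe h4]
        constructor
        · intro h; omega
        · intro h
          exact absurd h (sup2_bad _ _ (by omega) (by omega))
    · -- both odd
      have hbo' : β % 2 = 1 := Nat.odd_iff.mp hbo
      have hao : Odd α := Nat.odd_iff.mpr (by omega)
      by_cases h4 : α % 4 = β % 4
      · rw [hoo α β (by omega) hβ hao hbo h4]
        rw [ih ((α + 1) / 2) ((β + 1) / 2) (by omega) (by omega) (by omega) (by omega)]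
        have e1 : (α + 1) / 2 + (β + 1) / 2 - 2 = 2 * ((α + β - 2) / 4) := by omega
        have e2 : (α + 1) / 2 - (β + 1) / 2 = 2 * ((α - β) / 4) := by omega
        rw [e1, e2]
        exact (sup2_reduce (α + β - 2) (α - β) (by omega) (by omega) (by omega)).symm
      · rw [hoo' α β (by omega) hβ hao hbo h4]
        rw [ih ((α - 1) / 2) ((β + 1) / 2) (by omega) (by omega) (by omega) (by omega)]
        have e1 : (α - 1) / 2 + (β + 1) / 2 - 2 = 2 * ((α + β - 2) / 4) := by omega
        have e2 : (α - 1) / 2 - (β + 1) / 2 = 2 * ((α - β) / 4) := by omega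
        rw [e1, e2]
        exact (sup2_reduce (α + β - 2) (α - β) (by omega) (by omega) (by omega)).symm

theorem stmt_2 (f : ℕ → ℕ → ℕ)
    (h11 : f 1 1 = 1)
    (hoo : ∀ α β, 1 ≤ α → 1 ≤ β → Odd α → Odd β → α % 4 = β % 4 →
      f α β = f ((α + 1) / 2) ((β + 1) / 2))
    (hoo' : ∀ α β, 1 ≤ α → 1 ≤ β → Odd α → Odd β → α % 4 ≠ β % 4 →
      f α β = f ((α - 1) / 2) ((β + 1) / 2))
    (hee : ∀ α β, 1 ≤ α → 1 ≤ β → Even α → Even β → α % 4 = β % 4 →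
      f α β = f (α / 2) (β / 2))
    (hee' : ∀ α β, 1 ≤ α → 1 ≤ β → Even α → Even β → α % 4 ≠ β % 4 →
      f α β = 0)
    (α β : ℕ) (hβ : 1 ≤ β) (hβα : β ≤ α) (hpar : α % 2 = β % 2) :
    f α β = 1 ↔ Sup2 (α + β - 2) (α - β) := by
  exact aux_main f h11 hoo hoo' hee hee' (α + β) α β le_rfl hβ hβα hpar
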